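/- Let Λ be a numerical semigroup and x ∈ Λ with x = 6a_i for a minimal generator a_i, and suppose this is the only representation of x in terms of minimal generators (L_x^{(p)} = ∅ for p ≥ 2 and |L_x^{(1)}| = 1). Then B(x) \ {0} = {a_i, 2a_i, 3a_i, 4a_i, 5a_i, 6a_i} and G_{Λ\B(x)}(Λ) has exactly 6 vertices. -/

import Mathlib

/-- A numerical semigroup: a cofinite additive submonoid of ℕ. -/
def IsNumericalSemigroup (Λ : Set ℕ) : Prop :=
  0 ∈ Λ ∧ (∀ a ∈ Λ, ∀ b ∈ Λ, a + b ∈ Λ) ∧ (Λᶜ).Finite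

/-- An ideal of a numerical semigroup: a nonempty subset `I ⊆ Λ` with `I + Λ ⊆ I`. -/
def IsIdeal (Λ I : Set ℕ) : Prop :=
  I.Nonempty ∧ I ⊆ Λ ∧ ∀ i ∈ I, ∀ s ∈ Λ, i + s ∈ I

/-- An irreducible ideal: one that is not the intersection of two proper ideals
each properly containing it. -/
def IsIrreducibleIdeal (Λ I : Set ℕ) : Prop :=
  IsIdeal Λ I ∧
    ¬ ∃ J K : Set ℕ, IsIdeal Λ J ∧ IsIdeal Λ K ∧ J ≠ Λ ∧ K ≠ Λ ∧
      I ⊂ J ∧ I ⊂ K ∧ I = J ∩ K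

/-- The graph `G_I(Λ)`: vertices are the nonzero elements of `Λ \ I`,
and `x ~ y` iff `x + y ∈ I`. -/
def semigroupGraph (Λ I : Set ℕ) : SimpleGraph ↥((Λ \ I) \ {0}) where
  Adj x y := (x : ℕ) ≠ (y : ℕ) ∧ (x : ℕ) + (y : ℕ) ∈ I
  symm := by
    constructor
    intro x y h
    exact ⟨fun e => h.1 e.symm, by rw [add_comm]; exact h.2⟩
  loopless := by constructor; intro x h; exact h.1 rfl

/-- `B(x) = {y ∈ Λ : x - y ∈ Λ}` (i.e. `y + z = x` for some `z ∈ Λ`). -/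
def Bset (Λ : Set ℕ) (x : ℕ) : Set ℕ :=
  {y ∈ Λ | ∃ z ∈ Λ, y + z = x}

/-- The minimal generating set of a numerical semigroup: the nonzero elements
that are not sums of two nonzero elements. -/
def MinimalGenerators (Λ : Set ℕ) : Set ℕ :=
  {a ∈ Λ | a ≠ 0 ∧ ¬ ∃ b ∈ Λ, ∃ c ∈ Λ, b ≠ 0 ∧ c ≠ 0 ∧ a = b + c}

/-- `L_x^{(p)}`: representations of `x` as a positive-integer combination of
exactly `p` distinct minimal generators of `Λ`, encoded as finitely supported
functions from generators to positive coefficients. -/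
def Lrep (Λ : Set ℕ) (x : ℕ) (p : ℕ) : Set (ℕ →₀ ℕ) :=
  {u | (↑u.support : Set ℕ) ⊆ MinimalGenerators Λ ∧ u.support.card = p ∧
    u.sum (fun a c => c * a) = x}

/-- `G` contains a subdivision of `H`: branch vertices joined by internally
disjoint paths. -/
def SimpleGraph.ContainsSubdivision {V W : Type*} (G : SimpleGraph V)
    (H : SimpleGraph W) : Prop :=
  ∃ b : W ↪ V, ∃ P : ∀ i j : W, H.Adj i j → G.Walk (b i) (b j),
    (∀ i j (h : H.Adj i j), (P i j h).IsPath) ∧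
    (∀ i j (h : H.Adj i j) (k : W), b k ∈ (P i j h).support → k = i ∨ k = j) ∧
    (∀ i j (h : H.Adj i j) (i' j' : W) (h' : H.Adj i' j'),
      ({i, j} : Set W) ≠ {i', j'} →
      ∀ v, v ∈ (P i j h).support → v ∈ (P i' j' h').support →
        v = b i ∨ v = b j)

/-- Planarity via Kuratowski's criterion: no subgraph homeomorphic to
`K₅` or `K₃,₃`. -/
def SimpleGraph.Planar {V : Type*} (G : SimpleGraph V) : Prop :=
  ¬ G.ContainsSubdivision (⊤ : SimpleGraph (Fin 5)) ∧
  ¬ G.ContainsSubdivision (completeBipartiteGraph (Fin 3) (Fin 3))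


lemma exists_rep (Λ : Set ℕ) (hΛ : IsNumericalSemigroup Λ) :
    ∀ y, y ∈ Λ → ∃ u : ℕ →₀ ℕ, (↑u.support : Set ℕ) ⊆ MinimalGenerators Λ ∧
      u.sum (fun a c => c * a) = y := by
  intro y
  induction y using Nat.strong_induction_on with
  | _ y ih =>
    intro hy
    rcases eq_or_ne y 0 with rfl | hy0
    · exact ⟨0, by simp, by simp⟩
    by_cases hmin : y ∈ MinimalGenerators Λ
    · refine ⟨Finsupp.single y 1, ?_, ?_⟩
      · intro a ha
        simp only [Finsupp.support_single_ne_zero _ one_ne_zero, Finset.coe_singleton,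
          Set.mem_singleton_iff] at ha
        subst ha; exact hmin
      · simp [Finsupp.sum_single_index]
    · have : ∃ b ∈ Λ, ∃ c ∈ Λ, b ≠ 0 ∧ c ≠ 0 ∧ y = b + c := by
        by_contra h
        exact hmin ⟨hy, hy0, h⟩
      obtain ⟨b, hb, c, hc, hb0, hc0, hbc⟩ := this
      have hbl : b < y := by omega
      have hcl : c < y := by omega
      obtain ⟨ub, hub1, hub2⟩ := ih b hbl hb
      obtain ⟨uc, huc1, huc2⟩ := ih c hcl hc
      refine ⟨ub + uc, ?_, ?_⟩
      · intro a ha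
        have := Finsupp.support_add (g₁ := ub) (g₂ := uc) ha
        simp only [Finset.mem_union] at this
        rcases this with h | h
        · exact hub1 h
        · exact huc1 h
      · rw [Finsupp.sum_add_index' (fun a => by simp) (fun a b₁ b₂ => add_mul b₁ b₂ a),
          hub2, huc2, hbc]



/-- If `x = 6aᵢ` is the only representation of `x`
(`|L¹|=1`, `Lᵖ=∅` for `p ≥ 2`), then
`B(x) \ {0} = {aᵢ, 2aᵢ, 3aᵢ, 4aᵢ, 5aᵢ, 6aᵢ}` and the graph has exactly 6
vertices. -/
theorem Bset_of_six_ai (Λ : Set ℕ)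
    (hΛ : IsNumericalSemigroup Λ) (x ai : ℕ)
    (hai : ai ∈ MinimalGenerators Λ) (hx : x = 6 * ai)
    (hL1 : (Lrep Λ x 1).ncard = 1) (hLp : ∀ p, 2 ≤ p → Lrep Λ x p = ∅) :
    Bset Λ x \ {0} = {ai, 2 * ai, 3 * ai, 4 * ai, 5 * ai, 6 * ai} ∧
    (Bset Λ x \ {0}).ncard = 6 := by
  have hai0 : ai ≠ 0 := hai.2.1
  have haiΛ : ai ∈ Λ := hai.1
  have hmul : ∀ k : ℕ, k * ai ∈ Λ := by
    intro k
    induction k with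
    | zero => simpa using hΛ.1
    | succ n ihn =>
      have := hΛ.2.1 _ ihn _ haiΛ
      simpa [Nat.succ_mul] using this
  -- the canonical representation
  set u0 : ℕ →₀ ℕ := Finsupp.single ai 6 with hu0
  have hu0mem : u0 ∈ Lrep Λ x 1 := by
    refine ⟨?_, ?_, ?_⟩
    · intro a ha
      simp only [hu0, Finsupp.support_single_ne_zero _ (by norm_num : (6:ℕ) ≠ 0),
        Finset.coe_singleton, Set.mem_singleton_iff] at ha
      subst ha; exact hai
    · simp [hu0, Finsupp.support_single_ne_zero _ (by norm_num : (6:ℕ) ≠ 0)]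
    · simp [hu0, Finsupp.sum_single_index, hx]
  have hL1eq : Lrep Λ x 1 = {u0} := by
    have hfin : (Lrep Λ x 1).Finite := Set.finite_of_ncard_ne_zero (by omega)
    obtain ⟨v, hv⟩ := (Set.ncard_eq_one).mp hL1
    rw [hv] at hu0mem ⊢
    simp only [Set.mem_singleton_iff] at hu0mem
    rw [hu0mem]
  -- uniqueness of representation
  have huniq : ∀ u : ℕ →₀ ℕ, (↑u.support : Set ℕ) ⊆ MinimalGenerators Λ →
      u.sum (fun a c => c * a) = x → u = u0 := by
    intro u hs hsum
    have hcard : u.support.card = 1 := by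
      rcases Nat.lt_or_ge u.support.card 2 with h | h
      · interval_cases h' : u.support.card
        · have : u = 0 := Finsupp.support_eq_empty.mp (Finset.card_eq_zero.mp h')
          rw [this] at hsum
          simp at hsum
          omega
        · rfl
      · have : u ∈ Lrep Λ x u.support.card := ⟨hs, rfl, hsum⟩
        rw [hLp _ h] at this
        exact absurd this (Set.notMem_empty u)
    have : u ∈ Lrep Λ x 1 := ⟨hs, hcard, hsum⟩
    rw [hL1eq] at this
    exact this
  have main : Bset Λ x \ {0} = {ai, 2 * ai, 3 * ai, 4 * ai, 5 * ai, 6 * ai} := by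
    ext y
    simp only [Set.mem_diff, Set.mem_singleton_iff, Set.mem_insert_iff]
    constructor
    · rintro ⟨⟨hyΛ, z, hzΛ, hyz⟩, hy0⟩
      obtain ⟨uy, huy1, huy2⟩ := exists_rep Λ hΛ y hyΛ
      obtain ⟨uz, huz1, huz2⟩ := exists_rep Λ hΛ z hzΛ
      have hsum : (uy + uz).sum (fun a c => c * a) = x := by
        rw [Finsupp.sum_add_index' (fun a => by simp) (fun a b₁ b₂ => add_mul b₁ b₂ a),
          huy2, huz2, hyz]
      have hsupp : (↑(uy + uz).support : Set ℕ) ⊆ MinimalGenerators Λ := by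
        intro a ha
        have := Finsupp.support_add (g₁ := uy) (g₂ := uz) ha
        simp only [Finset.mem_union] at this
        rcases this with h | h
        · exact huy1 h
        · exact huz1 h
      have heq := huniq _ hsupp hsum
      -- uy a = 0 for a ≠ ai
      have huy_zero : ∀ a, a ≠ ai → uy a = 0 := by
        intro a ha
        have := DFunLike.congr_fun heq a
        simp only [Finsupp.add_apply, hu0, Finsupp.single_apply, if_neg (Ne.symm ha)] at this
        omega
      have huy_eq : uy = Finsupp.single ai (uy ai) := by
        ext a
        rcases eq_or_ne a ai with rfl | ha
        · simp
        · simp [Finsupp.single_apply, Ne.symm ha, huy_zero a ha]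
      have hle : uy ai ≤ 6 := by
        have := DFunLike.congr_fun heq ai
        simp only [Finsupp.add_apply, hu0, Finsupp.single_eq_same] at this
        omega
      have hy : y = uy ai * ai := by
        rw [huy_eq] at huy2
        rw [← huy2]
        rcases eq_or_ne (uy ai) 0 with h | h
        · simp [h]
        · rw [Finsupp.sum_single_index]; simp
      have hpos : 1 ≤ uy ai := by
        rcases Nat.eq_zero_or_pos (uy ai) with h | h
        · rw [h] at hy; simp at hy; exact absurd hy hy0
        · exact h
      set c := uy ai with hc
      interval_cases c <;> simp [hy] <;> omega
    · intro hy
      have key : ∀ k : ℕ, 1 ≤ k → k ≤ 6 → k * ai ∈ Bset Λ x ∧ k * ai ≠ 0 := by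
        intro k hk1 hk6
        refine ⟨⟨hmul k, (6 - k) * ai, hmul (6 - k), ?_⟩, ?_⟩
        · rw [hx, ← add_mul]; congr 1; omega
        · positivity
      rcases hy with rfl | rfl | rfl | rfl | rfl | rfl
      · simpa using key 1 (by norm_num) (by norm_num)
      · exact key 2 (by norm_num) (by norm_num)
      · exact key 3 (by norm_num) (by norm_num)
      · exact key 4 (by norm_num) (by norm_num)
      · exact key 5 (by norm_num) (by norm_num)
      · exact key 6 (by norm_num) (by norm_num)
  refine ⟨main, ?_⟩
  rw [main]
  have himg : ({ai, 2 * ai, 3 * ai, 4 * ai, 5 * ai, 6 * ai} : Set ℕ)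
      = (fun k => k * ai) '' ({1, 2, 3, 4, 5, 6} : Set ℕ) := by
    simp [Set.image_insert_eq, one_mul]
  rw [himg, Set.ncard_image_of_injective _ (fun a b h => by
    have := Nat.pos_of_ne_zero hai0
    exact Nat.eq_of_mul_eq_mul_right this h)]
  rw [show ({1, 2, 3, 4, 5, 6} : Set ℕ) = ↑({1, 2, 3, 4, 5, 6} : Finset ℕ) by simp]
  rw [Set.ncard_coe_finset]
  decide
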